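/- arXiv:1404.6586 — 6 statements merged into one kernel-verified Lean document; each statement's English description precedes it below -/
import Mathlib

section
/- Every nonzero root of a univariate polynomial with exactly ℓ nonzero terms (ℓ ≥ 1) over a field of characteristic zero has multiplicity at most ℓ − 1. -/
open Polynomial

private lemma support_X_mul_card {F : Type*} [Field F] (q : F[X]) :
    (Polynomial.X * q).support.card = q.support.card := by
  have h : (X * q).support = q.support.map ⟨Nat.succ, Nat.succ_injective⟩ := by
    ext n
    cases n with
    | zero => simp [mem_support_iff, mul_coeff_zero]
    | succ n => simp [mem_support_iff, coeff_X_mul, Nat.succ_eq_add_one]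
  rw [h, Finset.card_map]

private lemma support_derivative_card {F : Type*} [Field F] [CharZero F] (p : F[X])
    (h0 : p.coeff 0 ≠ 0) :
    (Polynomial.derivative p).support.card = p.support.card - 1 := by
  have h : (derivative p).support.map ⟨Nat.succ, Nat.succ_injective⟩ = p.support.erase 0 := by
    ext n
    cases n with
    | zero => simp
    | succ n =>
      simp [Finset.mem_erase, Nat.succ_eq_add_one, ← mem_support_iff,
        mem_support_derivative]
  have hc := congrArg Finset.card h
  rw [Finset.card_map, Finset.card_erase_of_mem (mem_support_iff.mpr h0)] at hc
  exact hc

private lemma aux_stmt {F : Type*} [Field F] [CharZero F] :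
    ∀ (n : ℕ) (p : Polynomial F) (ℓ : ℕ), p.natDegree ≤ n → 1 ≤ ℓ →
      p.support.card = ℓ → ∀ a : F, a ≠ 0 → p.IsRoot a →
      p.rootMultiplicity a ≤ ℓ - 1 := by
  intro n
  induction n with
  | zero =>
    intro p ℓ hdeg hℓ hsupp a ha hroot
    have hp0 : p ≠ 0 := by
      intro h; subst h; simp at hsupp; omega
    have : p = C (p.coeff 0) := eq_C_of_natDegree_eq_zero (Nat.le_zero.mp hdeg)
    rw [this] at hroot
    simp [IsRoot] at hroot
    exact absurd (this.trans (by rw [hroot, map_zero])) hp0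
  | succ n ih =>
    intro p ℓ hdeg hℓ hsupp a ha hroot
    have hp0 : p ≠ 0 := by
      intro h; subst h; simp at hsupp; omega
    by_cases hc : p.coeff 0 = 0
    · -- p = X * q
      have hq : p = X * p.divX := by
        conv_lhs => rw [← X_mul_divX_add p]
        rw [hc, map_zero, add_zero]
      set q := p.divX with hqdef
      have hq0 : q ≠ 0 := by
        intro h; rw [h, mul_zero] at hq; exact hp0 hq
      have hsuppq : q.support.card = ℓ := by
        rw [← hsupp, hq, support_X_mul_card]
      have hdegq : (q).natDegree ≤ n := by
        rw [natDegree_divX_eq_natDegree_tsub_one]; omega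
      have hrootq : (q).IsRoot a := by
        have : p.eval a = a * (q).eval a := by rw [hq]; simp
        rw [hroot] at this
        exact (mul_eq_zero.mp this.symm).resolve_left ha
      have hXmul : X * q ≠ 0 := hq ▸ hp0
      have hX : rootMultiplicity a (X : F[X]) = 0 :=
        rootMultiplicity_eq_zero (by simpa [IsRoot] using ha)
      calc p.rootMultiplicity a = (X * q).rootMultiplicity a := by rw [← hq]
        _ = (X : F[X]).rootMultiplicity a + (q).rootMultiplicity a :=
            rootMultiplicity_mul hXmul
        _ = (q).rootMultiplicity a := by rw [hX, zero_add]
        _ ≤ ℓ - 1 := ih q ℓ hdegq hℓ hsuppq a ha hrootq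
    · -- constant coefficient nonzero
      have hm : 0 < p.rootMultiplicity a := (rootMultiplicity_pos hp0).mpr hroot
      have hℓ2 : 2 ≤ ℓ := by
        by_contra h
        have hℓ1 : ℓ = 1 := by omega
        rw [hℓ1] at hsupp
        obtain ⟨k, x, hx, rfl⟩ := card_support_eq_one.mp hsupp
        have hk : k = 0 := by
          by_contra hk
          apply hc
          simp [coeff_C_mul, coeff_X_pow, (Ne.symm hk : (0:ℕ) ≠ k)]
        rw [hk] at hroot
        simp [IsRoot] at hroot
        exact hx hroot
      by_cases hm1 : p.rootMultiplicity a = 1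
      · omega
      · have hm2 : 2 ≤ p.rootMultiplicity a := by omega
        have hder : (derivative p).rootMultiplicity a = p.rootMultiplicity a - 1 :=
          derivative_rootMultiplicity_of_root hroot
        have hderpos : 0 < (derivative p).rootMultiplicity a := by omega
        obtain ⟨hd0, hdroot⟩ := rootMultiplicity_pos'.mp hderpos
        have hsuppd : (derivative p).support.card = ℓ - 1 := by
          rw [support_derivative_card p hc, hsupp]
        have hdegd : (derivative p).natDegree ≤ n :=
          (natDegree_derivative_le p).trans (by omega)
        have := ih (derivative p) (ℓ - 1) hdegd (by omega) hsuppd a ha hdroot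
        omega

/-- Every nonzero root of a univariate polynomial with exactly `ℓ` nonzero terms
(`ℓ ≥ 1`) over a field of characteristic zero has multiplicity at most `ℓ - 1`. -/
theorem stmt_0 {F : Type*} [Field F] [CharZero F] (p : Polynomial F) (ℓ : ℕ)
    (hℓ : 1 ≤ ℓ) (hsupp : p.support.card = ℓ) (a : F) (ha : a ≠ 0)
    (hroot : p.IsRoot a) :
    p.rootMultiplicity a ≤ ℓ - 1 :=
  aux_stmt p.natDegree p ℓ le_rfl hℓ hsupp a ha hroot
end

section
/- Let V = {v₁,…,vₙ} ⊂ ℕⁿ be linearly independent integer vectors with |det[v₁ … vₙ]| > 1. Then there exists a nonzero vector w ∈ ℕⁿ \ {0} of the form w = Σⱼ λⱼ vⱼ with all λⱼ ∈ [0,1), and for any such w, replacing any vⱼ with λⱼ ≠ 0 by w yields a matrix whose determinant has strictly smaller absolute value: 1 ≤ |det[w v₂ … vₙ]| < |det[v₁ … vₙ]| (when λ₁ ≠ 0). -/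
/-- If `v₁,…,vₙ ∈ ℕⁿ` have `|det[v₁ … vₙ]| > 1`, then there is a nonzero `w ∈ ℕⁿ`
of the form `w = Σ λⱼ vⱼ` with all `λⱼ ∈ [0,1)`, and for any such `w`, replacing any
column `vⱼ` with `λⱼ ≠ 0` by `w` strictly decreases the absolute value of the
determinant while keeping it at least `1`. -/
theorem stmt_1 (n : ℕ) (v : Fin n → Fin n → ℕ)
    (hdet : 1 < |(Matrix.of fun i j => (v j i : ℤ)).det|) :
    (∃ (w : Fin n → ℕ) (lam : Fin n → ℝ), w ≠ 0 ∧
      (∀ j, 0 ≤ lam j ∧ lam j < 1) ∧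
      (∀ i, (w i : ℝ) = ∑ j, lam j * (v j i : ℝ))) ∧
    ∀ (w : Fin n → ℕ) (lam : Fin n → ℝ), w ≠ 0 →
      (∀ j, 0 ≤ lam j ∧ lam j < 1) →
      (∀ i, (w i : ℝ) = ∑ j, lam j * (v j i : ℝ)) →
      ∀ j₀, lam j₀ ≠ 0 →
        1 ≤ |(Matrix.of fun i j => if j = j₀ then (w i : ℤ) else (v j i : ℤ)).det| ∧
        |(Matrix.of fun i j => if j = j₀ then (w i : ℤ) else (v j i : ℤ)).det| <
          |(Matrix.of fun i j => (v j i : ℤ)).det| := by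
  set A : Matrix (Fin n) (Fin n) ℤ := Matrix.of fun i j => (v j i : ℤ) with hA
  have hdetA0 : A.det ≠ 0 := by
    intro h; rw [h] at hdet; simp at hdet
  set Aℝ : Matrix (Fin n) (Fin n) ℝ := A.map (Int.cast : ℤ → ℝ) with hAR
  have hdetAR : Aℝ.det = (A.det : ℝ) := (RingHom.map_det (Int.castRingHom ℝ) A).symm
  have hdetAR0 : Aℝ.det ≠ 0 := by
    rw [hdetAR]; exact_mod_cast hdetA0
  constructor
  · -- existence
    have hnP : ¬ ∀ x : Fin n → ℤ, ∃ c : Fin n → ℤ, ∀ i, x i = ∑ j, c j * (v j i : ℤ) := by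
      intro h
      choose b hb using h
      set B : Matrix (Fin n) (Fin n) ℤ := Matrix.of fun j i => b (Pi.single i 1) j with hB
      have hAB : A * B = 1 := by
        ext k i
        have h1 := hb (Pi.single i 1) k
        simp only [Matrix.mul_apply, hA, hB, Matrix.of_apply, Matrix.one_apply]
        rw [show ∑ j, (v j k : ℤ) * b (Pi.single i 1) j
            = ∑ j, b (Pi.single i 1) j * (v j k : ℤ) from
          Finset.sum_congr rfl fun j _ => mul_comm _ _]
        rw [← h1]
        by_cases hki : k = i <;> simp [hki, Pi.single_apply]
      have h2 : A.det * B.det = 1 := by rw [← Matrix.det_mul, hAB, Matrix.det_one]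
      have h3 : |A.det| = 1 := by
        rcases Int.isUnit_iff.mp (isUnit_of_dvd_one ⟨B.det, h2.symm⟩) with h | h <;> simp [h]
      omega
    push_neg at hnP
    obtain ⟨x, hx⟩ := hnP
    set xℝ : Fin n → ℝ := fun i => (x i : ℝ) with hxR
    set μ : Fin n → ℝ := Aℝ⁻¹.mulVec xℝ with hμ
    have hAμ : Aℝ.mulVec μ = xℝ := by
      rw [hμ, Matrix.mulVec_mulVec,
        Matrix.mul_nonsing_inv _ (isUnit_iff_ne_zero.mpr hdetAR0), Matrix.one_mulVec]
    have hxdecomp : ∀ i, (x i : ℝ) = ∑ j, μ j * (v j i : ℝ) := by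
      intro i
      have h1 := congrFun hAμ i
      rw [Matrix.mulVec, dotProduct] at h1
      rw [show ((x i : ℝ)) = xℝ i from rfl, ← h1]
      exact Finset.sum_congr rfl fun j _ => by simp [hAR, hA, mul_comm]
    set lam : Fin n → ℝ := fun j => Int.fract (μ j) with hlam
    set w' : Fin n → ℤ := fun i => x i - ∑ j, ⌊μ j⌋ * (v j i : ℤ) with hw'
    have hw'R : ∀ i, (w' i : ℝ) = ∑ j, lam j * (v j i : ℝ) := by
      intro i
      show ((x i - ∑ j, ⌊μ j⌋ * (v j i : ℤ) : ℤ) : ℝ) = _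
      push_cast
      rw [hxdecomp i, ← Finset.sum_sub_distrib]
      refine Finset.sum_congr rfl fun j _ => ?_
      show _ = Int.fract (μ j) * _
      simp only [Int.fract]
      ring
    have hw'0 : ∀ i, 0 ≤ w' i := by
      intro i
      have h1 : (0 : ℝ) ≤ (w' i : ℝ) := by
        rw [hw'R i]
        exact Finset.sum_nonneg fun j _ =>
          mul_nonneg (Int.fract_nonneg _) (Nat.cast_nonneg _)
      exact_mod_cast h1
    refine ⟨fun i => (w' i).toNat, lam, ?_,
      fun j => ⟨Int.fract_nonneg _, Int.fract_lt_one _⟩, ?_⟩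
    · intro h0
      obtain ⟨i, hi⟩ := hx (fun j => ⌊μ j⌋)
      apply hi
      have h1 := congrFun h0 i
      simp only [Pi.zero_apply] at h1
      have h2 : (w' i).toNat = 0 := h1
      have h3 := hw'0 i
      have h4 : w' i = 0 := by omega
      have h5 : x i - ∑ j, ⌊μ j⌋ * (v j i : ℤ) = 0 := h4
      omega
    · intro i
      have h := hw'R i
      rw [← Int.toNat_of_nonneg (hw'0 i)] at h
      exact_mod_cast h
  · -- decrease part
    intro w lam hw0 hlam hwdecomp j₀ hj₀
    set M : Matrix (Fin n) (Fin n) ℤ :=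
      Matrix.of fun i j => if j = j₀ then (w i : ℤ) else (v j i : ℤ) with hM
    have hMup : M = A.updateCol j₀ (fun i => (w i : ℤ)) := by
      ext i j
      rw [hM, hA, Matrix.updateCol_apply]
      by_cases h : j = j₀ <;> simp [h]
    have hMR : (M.map (Int.cast : ℤ → ℝ)).det = (M.det : ℝ) :=
      (RingHom.map_det (Int.castRingHom ℝ) M).symm
    have hMmap : M.map (Int.cast : ℤ → ℝ)
        = Aℝ.updateCol j₀ (fun i => (w i : ℝ)) := by
      ext i j
      rw [hMup, hAR, Matrix.map_apply, Matrix.updateCol_apply, Matrix.updateCol_apply]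
      by_cases h : j = j₀ <;> simp [h]
    have hcol : (fun i => (w i : ℝ)) = fun k => ∑ j, lam j • Aℝ k j := by
      funext k
      rw [hwdecomp k]
      exact Finset.sum_congr rfl fun j _ => by simp [hAR, hA]
    have hdetM : (M.det : ℝ) = lam j₀ * Aℝ.det := by
      rw [← hMR, hMmap, hcol, Matrix.det_updateCol_sum]
      simp
    have hlj : 0 < lam j₀ ∧ lam j₀ < 1 := ⟨lt_of_le_of_ne (hlam j₀).1 (Ne.symm hj₀), (hlam j₀).2⟩
    have hM0 : M.det ≠ 0 := by
      intro h
      rw [h] at hdetM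
      exact (mul_ne_zero (ne_of_gt hlj.1) hdetAR0) (by exact_mod_cast hdetM.symm)
    constructor
    · exact Int.one_le_abs hM0
    · have hr : (|M.det| : ℝ) < (|A.det| : ℝ) := by
        rw [hdetM, abs_mul, abs_of_pos hlj.1, ← hdetAR]
        have hpos : 0 < |Aℝ.det| := abs_pos.mpr hdetAR0
        nlinarith [hlj.2]
      exact_mod_cast hr
end

section
/- Let M be an n×n matrix with entries in ℕ, partitioned in block form M = [[A, B],[C, D]] where A is k×k and D is (n−k)×(n−k). Suppose det M ≠ 0 and det D ≠ 0. Define the k×k matrix F whose (i,j)-entry is the determinant of the (n−k+1)×(n−k+1) submatrix of M obtained by taking row i together with the last n−k rows, and column j together with the last n−k columns. Then det F ≠ 0. -/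
/-- For an `n × n` matrix `M = [[A,B],[C,D]]` (with `A` of size `k × k` and `D` of size
`(n-k) × (n-k)`, encoded via the index type `Fin k ⊕ Fin m`), if `det M ≠ 0` and
`det D ≠ 0`, then the reduction matrix `F`, whose `(i,j)` entry is the determinant of
the submatrix of `M` on rows `{i} ∪ {k+1,…,n}` and columns `{j} ∪ {k+1,…,n}`, is
non-degenerate: `det F ≠ 0`. -/
theorem stmt_2 {k m : ℕ} (M : Matrix (Fin k ⊕ Fin m) (Fin k ⊕ Fin m) ℚ)
    (hM : M.det ≠ 0) (hD : M.toBlocks₂₂.det ≠ 0)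
    (F : Matrix (Fin k) (Fin k) ℚ)
    (hF : ∀ i j, F i j = (Matrix.of fun a b : Unit ⊕ Fin m =>
      M (Sum.elim (fun _ => Sum.inl i) Sum.inr a)
        (Sum.elim (fun _ => Sum.inl j) Sum.inr b)).det) :
    F.det ≠ 0 := by
  set A := M.toBlocks₁₁ with hA
  set B := M.toBlocks₁₂ with hB
  set C := M.toBlocks₂₁ with hC
  set D := M.toBlocks₂₂ with hDdef
  have : Invertible D := D.invertibleOfIsUnitDet (isUnit_iff_ne_zero.mpr hD)
  set S := A - B * ⅟D * C with hS
  have hFS : F = D.det • S := by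
    ext i j
    have h1 : (Matrix.of fun a b : Unit ⊕ Fin m =>
        M (Sum.elim (fun _ => Sum.inl i) Sum.inr a)
          (Sum.elim (fun _ => Sum.inl j) Sum.inr b)) =
        Matrix.fromBlocks (Matrix.of fun _ _ : Unit => A i j)
          (Matrix.of fun (_ : Unit) b => B i b)
          (Matrix.of fun a (_ : Unit) => C a j) D := by
      ext a b
      cases a <;> cases b <;> rfl
    rw [hF, h1, Matrix.det_fromBlocks₂₂, Matrix.smul_apply, smul_eq_mul]
    congr 1
    rw [Matrix.det_unique]
    simp [hS, Matrix.sub_apply, Matrix.mul_apply]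
  have hdetM : M.det = D.det * S.det := by
    conv_lhs => rw [← Matrix.fromBlocks_toBlocks M]
    rw [Matrix.det_fromBlocks₂₂]
  have hSdet : S.det ≠ 0 := by
    intro h
    rw [hdetM, h, mul_zero] at hM
    exact hM rfl
  rw [hFS, Matrix.det_smul]
  exact mul_ne_zero (pow_ne_zero _ hD) hSdet
end

section
/- Let M = [[A, B],[C, D]] be an n×n matrix over ℚ with D an (n−k)×(n−k) block satisfying det D ≠ 0, and let D* be the adjugate of D. Then the reduction matrix F (whose (i,j)-entry is det of the submatrix on rows {i}∪{k+1,…,n} and columns {j}∪{k+1,…,n}) satisfies the identity F = (det D)·A − B·D*·C. -/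
/-- For an `n × n` matrix `M = [[A,B],[C,D]]` over `ℚ` with `det D ≠ 0`, the reduction
matrix `F` (entrywise determinants of the submatrices of `M` on rows `{i} ∪ {k+1,…,n}`
and columns `{j} ∪ {k+1,…,n}`) satisfies `F = (det D) • A - B * D* * C`, where `D*` is
the adjugate of `D`. -/
theorem stmt_3 {k m : ℕ} (M : Matrix (Fin k ⊕ Fin m) (Fin k ⊕ Fin m) ℚ)
    (hD : M.toBlocks₂₂.det ≠ 0)
    (F : Matrix (Fin k) (Fin k) ℚ)
    (hF : ∀ i j, F i j = (Matrix.of fun a b : Unit ⊕ Fin m =>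
      M (Sum.elim (fun _ => Sum.inl i) Sum.inr a)
        (Sum.elim (fun _ => Sum.inl j) Sum.inr b)).det) :
    F = M.toBlocks₂₂.det • M.toBlocks₁₁ -
      M.toBlocks₁₂ * M.toBlocks₂₂.adjugate * M.toBlocks₂₁ := by
  set D := M.toBlocks₂₂ with hDdef
  have hinv : IsUnit D.det := isUnit_iff_ne_zero.mpr hD
  have : Invertible D := D.invertibleOfIsUnitDet hinv
  ext i j
  have hblock : (Matrix.of fun a b : Unit ⊕ Fin m =>
      M (Sum.elim (fun _ => Sum.inl i) Sum.inr a)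
        (Sum.elim (fun _ => Sum.inl j) Sum.inr b)) =
      Matrix.fromBlocks (Matrix.of fun _ _ : Unit => M (Sum.inl i) (Sum.inl j))
        (Matrix.of fun (_ : Unit) b => M (Sum.inl i) (Sum.inr b))
        (Matrix.of fun a (_ : Unit) => M (Sum.inr a) (Sum.inl j)) D := by
    ext a b
    cases a <;> cases b <;> rfl
  have hdet := hF i j
  rw [hblock, Matrix.det_fromBlocks₂₂] at hdet
  simp only [Matrix.det_unique] at hdet
  have hinvD : D⁻¹ = (D.det)⁻¹ • D.adjugate := by rw [Matrix.inv_def, Ring.inverse_eq_inv']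
  rw [Matrix.invOf_eq_nonsing_inv] at hdet
  simp only [Matrix.sub_apply, Matrix.mul_apply, Matrix.of_apply, Matrix.smul_apply,
    hinvD, Matrix.smul_apply, smul_eq_mul] at hdet
  simp only [Matrix.sub_apply, Matrix.smul_apply, Matrix.mul_apply, smul_eq_mul, hdet]
  simp only [Matrix.toBlocks₁₁, Matrix.toBlocks₁₂, Matrix.toBlocks₂₁, Matrix.of_apply]
  rw [mul_sub]
  congr 1
  rw [Finset.mul_sum]
  refine Finset.sum_congr rfl fun x _ => ?_
  rw [← mul_assoc, Finset.mul_sum]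
  congr 1
  refine Finset.sum_congr rfl fun y _ => ?_
  field_simp
end

section
/- Let NP ⊂ ℝⁿ be a Newton polyhedron, F a face of NP, and g(F) its generator set, namely the set of primitive facet normals v with F ⊆ facet(v). Then g(F) is minimal: for every v ∈ g(F), v does not lie in the cone generated by g(F) \ {v}. Furthermore, the cone C(g(F)) intersected with the set of all primitive facet normals of NP equals g(F). -/
/-- The Newton polyhedron of a finite nonempty set `S ⊂ ℕⁿ`:
the convex hull of `S + ℝ₊ⁿ`. -/
def NP (n : ℕ) (S : Finset (Fin n → ℕ)) : Set (Fin n → ℝ) :=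
  convexHull ℝ {x : Fin n → ℝ |
    ∃ s ∈ S, ∃ r : Fin n → ℝ, (∀ i, 0 ≤ r i) ∧ x = fun i => (s i : ℝ) + r i}

/-- The face of the Newton polyhedron associated with a vector `w`:
the set of points of `NP` minimizing the linear functional `⟨w, ·⟩`. -/
def npFace (n : ℕ) (S : Finset (Fin n → ℕ)) (w : Fin n → ℝ) : Set (Fin n → ℝ) :=
  {α | α ∈ NP n S ∧ ∀ β ∈ NP n S, ∑ i, w i * α i ≤ ∑ i, w i * β i}

/-- `v ∈ ℕⁿ` is a primitive facet normal of the Newton polyhedron: it is nonzero, its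
components are coprime, and its face has affine dimension `n - 1`. -/
def IsFacetNormal (n : ℕ) (S : Finset (Fin n → ℕ)) (v : Fin n → ℕ) : Prop :=
  v ≠ 0 ∧ Finset.univ.gcd v = 1 ∧
    Module.finrank ℝ (vectorSpan ℝ (npFace n S fun i => (v i : ℝ))) = n - 1

/-- A vertex of the Newton polyhedron: a point that is a `0`-dimensional face,
i.e. a singleton face `face(w) = {A}` for some `w ∈ ℝ₊ⁿ \ {0}`. -/
def IsVertex (n : ℕ) (S : Finset (Fin n → ℕ)) (A : Fin n → ℝ) : Prop :=
  ∃ w : Fin n → ℝ, (∀ i, 0 ≤ w i) ∧ w ≠ 0 ∧ npFace n S w = {A}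

/-- The generator set `g(F)` of a face `F`: the primitive facet normals `v` with
`F ⊆ facet(v)`, viewed as real vectors. -/
def genSet (n : ℕ) (S : Finset (Fin n → ℕ)) (Fc : Set (Fin n → ℝ)) :
    Set (Fin n → ℝ) :=
  {x | ∃ v : Fin n → ℕ, x = (fun i => (v i : ℝ)) ∧ IsFacetNormal n S v ∧
    Fc ⊆ npFace n S fun i => (v i : ℝ)}

/-- Membership in the convex polyhedral cone generated by a set `T` of vectors
(the zero vector is excluded from the cone). -/
def InCone (n : ℕ) (T : Set (Fin n → ℝ)) (x : Fin n → ℝ) : Prop :=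
  x ≠ 0 ∧ ∃ (V : Finset (Fin n → ℝ)) (lam : (Fin n → ℝ) → ℝ),
    ↑V ⊆ T ∧ (∀ v ∈ V, 0 ≤ lam v) ∧ x = ∑ v ∈ V, lam v • v

/-- Membership in the relative interior of the cone generated by a (finite) set `T`:
a combination of all generators with strictly positive coefficients. -/
def InConeInt (n : ℕ) (T : Set (Fin n → ℝ)) (x : Fin n → ℝ) : Prop :=
  x ≠ 0 ∧ ∃ (V : Finset (Fin n → ℝ)) (lam : (Fin n → ℝ) → ℝ),
    ↑V = T ∧ (∀ v ∈ V, 0 < lam v) ∧ x = ∑ v ∈ V, lam v • v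

noncomputable section

namespace Stmt6Aux

variable {n : ℕ}

/-- The linear functional `x ↦ ⟨w, x⟩`. -/
def phi (w : Fin n → ℝ) : (Fin n → ℝ) →ₗ[ℝ] ℝ where
  toFun x := ∑ i, w i * x i
  map_add' x y := by simp [mul_add, Finset.sum_add_distrib]
  map_smul' c x := by
    simp only [Pi.smul_apply, smul_eq_mul, RingHom.id_apply, Finset.mul_sum]
    exact Finset.sum_congr rfl fun i _ => by ring

lemma phi_apply (w x : Fin n → ℝ) : phi w x = ∑ i, w i * x i := rfl

lemma phi_single (w : Fin n → ℝ) (j : Fin n) : phi w (Pi.single j 1) = w j := by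
  simp [phi_apply, Pi.single_apply, mul_ite, Finset.sum_ite_eq']

lemma phi_combo (V : Finset (Fin n → ℝ)) (lam : (Fin n → ℝ) → ℝ) (α : Fin n → ℝ) :
    phi (∑ v ∈ V, lam v • v) α = ∑ v ∈ V, lam v * phi v α := by
  simp only [phi_apply, Finset.sum_apply, Pi.smul_apply, smul_eq_mul, Finset.sum_mul,
    Finset.mul_sum]
  rw [Finset.sum_comm]
  exact Finset.sum_congr rfl fun v _ => Finset.sum_congr rfl fun i _ => by ring

lemma mem_npFace_iff (S : Finset (Fin n → ℕ)) (u α : Fin n → ℝ) :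
    α ∈ npFace n S u ↔ α ∈ NP n S ∧ ∀ β ∈ NP n S, phi u α ≤ phi u β := Iff.rfl

/-- The face of a nonnegative functional is nonempty. -/
lemma npFace_nonempty (S : Finset (Fin n → ℕ)) (hS : S.Nonempty) (w : Fin n → ℝ)
    (hw : ∀ i, 0 ≤ w i) : (npFace n S w).Nonempty := by
  obtain ⟨s₀, hs₀S, hmin⟩ := S.exists_min_image (fun s => ∑ i, w i * (s i : ℝ)) hS
  refine ⟨fun i => (s₀ i : ℝ), ?_, ?_⟩
  · exact subset_convexHull ℝ _ ⟨s₀, hs₀S, 0, fun i => le_refl 0, by funext i; simp⟩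
  · intro β hβ
    have hconv : Convex ℝ {x : Fin n → ℝ | (∑ i, w i * (s₀ i : ℝ)) ≤ phi w x} :=
      convex_halfSpace_ge (phi w).isLinear _
    have hsub : {x : Fin n → ℝ |
        ∃ s ∈ S, ∃ r : Fin n → ℝ, (∀ i, 0 ≤ r i) ∧ x = fun i => (s i : ℝ) + r i} ⊆
        {x : Fin n → ℝ | (∑ i, w i * (s₀ i : ℝ)) ≤ phi w x} := by
      rintro x ⟨s, hsS, r, hr, rfl⟩
      have h1 : phi w (fun i => (s i : ℝ) + r i) =
          (∑ i, w i * (s i : ℝ)) + ∑ i, w i * r i := by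
        simp [phi_apply, mul_add, Finset.sum_add_distrib]
      have h2 : (0:ℝ) ≤ ∑ i, w i * r i :=
        Finset.sum_nonneg fun i _ => mul_nonneg (hw i) (hr i)
      have := hmin s hsS
      simp only [Set.mem_setOf_eq, h1]
      linarith
    exact convexHull_min hsub hconv hβ

/-- If `α` lies in the face of every generator, it lies in the face of any
nonnegative combination. -/
lemma mem_face_combo (S : Finset (Fin n → ℕ)) (V : Finset (Fin n → ℝ))
    (lam : (Fin n → ℝ) → ℝ) (hlam : ∀ v ∈ V, 0 ≤ lam v) (α : Fin n → ℝ)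
    (hαNP : α ∈ NP n S) (hα : ∀ v ∈ V, α ∈ npFace n S v) :
    α ∈ npFace n S (∑ v ∈ V, lam v • v) := by
  refine ⟨hαNP, fun β hβ => ?_⟩
  have : phi (∑ v ∈ V, lam v • v) α ≤ phi (∑ v ∈ V, lam v • v) β := by
    rw [phi_combo, phi_combo]
    exact Finset.sum_le_sum fun v hv =>
      mul_le_mul_of_nonneg_left ((hα v hv).2 β hβ) (hlam v hv)
  exact this

/-- If `u = ∑ lam v • v` with `lam v₀ > 0`, and `α` is in the face of each `v`,
then `face(u) ⊆ face(v₀)`. -/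
lemma face_subset_of_pos (S : Finset (Fin n → ℕ)) (V : Finset (Fin n → ℝ))
    (lam : (Fin n → ℝ) → ℝ) (hlam : ∀ v ∈ V, 0 ≤ lam v) (v₀ : Fin n → ℝ)
    (hv₀ : v₀ ∈ V) (hpos : 0 < lam v₀) (α : Fin n → ℝ)
    (hα : ∀ v ∈ V, α ∈ npFace n S v) :
    npFace n S (∑ v ∈ V, lam v • v) ⊆ npFace n S v₀ := by
  intro β hβ
  have hαNP : α ∈ NP n S := (hα v₀ hv₀).1
  have hαu : α ∈ npFace n S (∑ v ∈ V, lam v • v) :=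
    mem_face_combo S V lam hlam α hαNP hα
  have hβNP : β ∈ NP n S := hβ.1
  have heq : phi (∑ v ∈ V, lam v • v) β = phi (∑ v ∈ V, lam v • v) α :=
    le_antisymm (hβ.2 α hαNP) (hαu.2 β hβNP)
  have hsum0 : ∑ v ∈ V, lam v * (phi v β - phi v α) = 0 := by
    have := heq
    rw [phi_combo, phi_combo] at this
    simp only [mul_sub]
    rw [Finset.sum_sub_distrib, this, sub_self]
  have hterm : ∀ v ∈ V, lam v * (phi v β - phi v α) = 0 := by
    rw [Finset.sum_eq_zero_iff_of_nonneg] at hsum0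
    · exact hsum0
    · exact fun v hv => mul_nonneg (hlam v hv) (sub_nonneg.mpr ((hα v hv).2 β hβNP))
  have h0 : phi v₀ β = phi v₀ α := by
    have := hterm v₀ hv₀
    have h := mul_eq_zero.mp this
    rcases h with h | h
    · exact absurd h (ne_of_gt hpos)
    · linarith [sub_eq_zero.mp h]
  refine ⟨hβNP, fun γ hγ => ?_⟩
  show phi v₀ β ≤ phi v₀ γ
  rw [h0]
  exact (hα v₀ hv₀).2 γ hγ

/-- Vector span of a face lies in the kernel of its functional. -/
lemma vectorSpan_face_le_ker (S : Finset (Fin n → ℕ)) (u : Fin n → ℝ) :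
    vectorSpan ℝ (npFace n S u) ≤ LinearMap.ker (phi u) := by
  rw [vectorSpan, Submodule.span_le]
  rintro z ⟨x, hx, y, hy, rfl⟩
  have h1 : phi u x ≤ phi u y := hx.2 y hy.1
  have h2 : phi u y ≤ phi u x := hy.2 x hx.1
  simp only [SetLike.mem_coe, LinearMap.mem_ker, vsub_eq_sub, map_sub]
  linarith

/-- Rigidity: two primitive facet normals with nested facets are equal. -/
lemma rigid (S : Finset (Fin n → ℕ)) (u v : Fin n → ℕ)
    (hu : IsFacetNormal n S u) (hv : IsFacetNormal n S v)
    (hsub : npFace n S (fun i => (v i : ℝ)) ⊆ npFace n S (fun i => (u i : ℝ))) :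
    u = v := by
  obtain ⟨i₀, hi₀⟩ := Function.ne_iff.mp hu.1
  have hi₀' : u i₀ ≠ 0 := hi₀
  -- kernels have finrank n-1
  have hkerrank : ∀ x : Fin n → ℕ, x ≠ 0 →
      Module.finrank ℝ (LinearMap.ker (phi fun i => (x i : ℝ))) = n - 1 := by
    intro x hx
    obtain ⟨j, hj⟩ := Function.ne_iff.mp hx
    have hne : phi (fun i => (x i : ℝ)) ≠ 0 := by
      intro h
      have := phi_single (fun i => (x i : ℝ)) j
      rw [h] at this
      simp only [LinearMap.zero_apply] at this
      exact hj (by exact_mod_cast this.symm)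
    have hc : phi (fun i => (x i : ℝ)) (Pi.single j 1) ≠ 0 := by
      rw [phi_single]
      exact_mod_cast hj
    have hrange : LinearMap.range (phi fun i => (x i : ℝ)) = ⊤ := by
      rw [eq_top_iff]
      intro r _
      refine ⟨(r / phi (fun i => (x i : ℝ)) (Pi.single j 1)) • (Pi.single j 1 : Fin n → ℝ), ?_⟩
      rw [map_smul, smul_eq_mul, div_mul_cancel₀ _ hc]
    have := LinearMap.finrank_range_add_finrank_ker (phi fun i => (x i : ℝ))
    rw [hrange, finrank_top] at this
    have hpi : Module.finrank ℝ (Fin n → ℝ) = n := by simp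
    have h1 : Module.finrank ℝ ℝ = 1 := Module.finrank_self ℝ
    omega
  have hWu := Submodule.eq_of_le_of_finrank_eq
    (vectorSpan_face_le_ker S (fun i => (u i : ℝ)))
    (by rw [hu.2.2, hkerrank u hu.1])
  have hWv := Submodule.eq_of_le_of_finrank_eq
    (vectorSpan_face_le_ker S (fun i => (v i : ℝ)))
    (by rw [hv.2.2, hkerrank v hv.1])
  have hle : vectorSpan ℝ (npFace n S fun i => (v i : ℝ)) ≤
      vectorSpan ℝ (npFace n S fun i => (u i : ℝ)) := vectorSpan_mono ℝ hsub
  have hVV : vectorSpan ℝ (npFace n S fun i => (v i : ℝ)) =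
      vectorSpan ℝ (npFace n S fun i => (u i : ℝ)) :=
    Submodule.eq_of_le_of_finrank_eq hle (by rw [hu.2.2, hv.2.2])
  have hker : LinearMap.ker (phi fun i => (v i : ℝ)) =
      LinearMap.ker (phi fun i => (u i : ℝ)) := by
    rw [← hWu, ← hWv, hVV]
  -- coordinatewise proportionality
  have key : ∀ i, u i₀ * v i = u i * v i₀ := by
    intro i
    set z : Fin n → ℝ := (u i₀ : ℝ) • (Pi.single i 1 : Fin n → ℝ) - (u i : ℝ) • (Pi.single i₀ 1 : Fin n → ℝ) with hz
    have hzu : z ∈ LinearMap.ker (phi fun i => (u i : ℝ)) := by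
      simp only [LinearMap.mem_ker, hz, map_sub, map_smul, phi_single, smul_eq_mul]
      ring
    rw [← hker] at hzu
    have hzv : phi (fun i => (v i : ℝ)) z = 0 := hzu
    simp only [hz, map_sub, map_smul, phi_single, smul_eq_mul] at hzv
    have : (u i₀ : ℝ) * v i = u i * v i₀ := by linarith
    exact_mod_cast this
  have hgcd : u i₀ = v i₀ := by
    have h1 : Finset.univ.gcd (fun i => u i₀ * v i) = u i₀ * Finset.univ.gcd v := by
      simpa using (Finset.gcd_mul_left (s := Finset.univ) (f := v) (a := u i₀))
    have h2 : Finset.univ.gcd (fun i => v i₀ * u i) = v i₀ * Finset.univ.gcd u := by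
      simpa using (Finset.gcd_mul_left (s := Finset.univ) (f := u) (a := v i₀))
    have h3 : (fun i => u i₀ * v i) = (fun i => v i₀ * u i) := by
      funext i; rw [key i, mul_comm]
    rw [h3, h2, hu.2.1, mul_one] at h1
    rw [hv.2.1, mul_one] at h1
    exact h1.symm
  funext i
  have hk := key i
  rw [← hgcd] at hk
  have hk' : u i₀ * v i = u i₀ * u i := by rw [hk, Nat.mul_comm]
  exact (Nat.eq_of_mul_eq_mul_left (Nat.pos_of_ne_zero hi₀') hk').symm

lemma cast_ne_zero (x : Fin n → ℕ) (hx : x ≠ 0) : (fun i => (x i : ℝ)) ≠ 0 := by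
  obtain ⟨j, hj⟩ := Function.ne_iff.mp hx
  intro h
  have : (x j : ℝ) = 0 := congrFun h j
  exact hj (by exact_mod_cast this)

end Stmt6Aux

open Stmt6Aux

/-- The generator set `g(F)` of a face `F` of the Newton polyhedron is minimal: no
`v ∈ g(F)` lies in the cone generated by `g(F) \ {v}`; moreover the cone `C(g(F))`
meets the set of all primitive facet normals exactly in `g(F)`. -/
theorem stmt_6 (n : ℕ) (S : Finset (Fin n → ℕ)) (hS : S.Nonempty)
    (w : Fin n → ℝ) (hw : ∀ i, 0 ≤ w i) (hw0 : w ≠ 0)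
    (Fc : Set (Fin n → ℝ)) (hF : Fc = npFace n S w) :
    (∀ x ∈ genSet n S Fc, ¬ InCone n (genSet n S Fc \ {x}) x) ∧
    (∀ u : Fin n → ℕ, IsFacetNormal n S u →
      (InCone n (genSet n S Fc) (fun i => (u i : ℝ)) ↔
        (fun i => (u i : ℝ)) ∈ genSet n S Fc)) := by
  obtain ⟨α, hα⟩ := npFace_nonempty S hS w hw
  have hαNP : α ∈ NP n S := hα.1
  have hαF : α ∈ Fc := hF ▸ hα
  constructor
  · -- minimality
    rintro x hx ⟨hx0, V, lam, hVsub, hlam, hrep⟩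
    obtain ⟨v, rfl, hvN, hvF⟩ := hx
    -- find a generator with positive coefficient
    have hex : ∃ y ∈ V, lam y • y ≠ (0 : Fin n → ℝ) := by
      by_contra h
      push_neg at h
      rw [Finset.sum_eq_zero h] at hrep
      exact hx0 hrep
    obtain ⟨y, hyV, hy0⟩ := hex
    have hlamy : 0 < lam y := by
      rcases lt_or_eq_of_le (hlam y hyV) with h | h
      · exact h
      · exact absurd (by rw [← h, zero_smul]) hy0
    have hymem := hVsub hyV
    obtain ⟨u', hyu', hu'N, hu'F⟩ := hymem.1
    have hyne : y ≠ (fun i => (v i : ℝ)) := fun h => hymem.2 h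
    -- α is in face of every element of V
    have hαV : ∀ z ∈ V, α ∈ npFace n S z := by
      intro z hzV
      obtain ⟨v', rfl, _, hv'F⟩ := (hVsub hzV).1
      exact hv'F hαF
    have hsub : npFace n S (fun i => (v i : ℝ)) ⊆ npFace n S y := by
      rw [hrep]
      exact face_subset_of_pos S V lam hlam y hyV hlamy α hαV
    rw [hyu'] at hsub
    have : u' = v := rigid S u' v hu'N hvN hsub
    exact hyne (by rw [hyu', this])
  · -- cone meets facet normals exactly in genSet
    intro u hu
    constructor
    · rintro ⟨hne, V, lam, hVsub, hlam, hrep⟩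
      refine ⟨u, rfl, hu, ?_⟩
      intro α' hα'F
      have hα'NP : α' ∈ NP n S := (hF ▸ hα'F : α' ∈ npFace n S w).1
      have hα'V : ∀ z ∈ V, α' ∈ npFace n S z := by
        intro z hzV
        obtain ⟨v', rfl, _, hv'F⟩ := hVsub hzV
        exact hv'F hα'F
      rw [hrep]
      exact mem_face_combo S V lam hlam α' hα'NP hα'V
    · intro hmem
      refine ⟨cast_ne_zero u hu.1, {fun i => (u i : ℝ)}, fun _ => 1, ?_, ?_, ?_⟩
      · simpa using hmem
      · intro v _; norm_num
      · simp
end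
end

section
/- Let w(x) = x₁^d + Σ_{j=2}^{d} c_j(x₂,…,xₙ) x₁^{d−j} be a Weierstrass polynomial with c_j(0) = 0 and d ≥ 2, and let N = [[I_k, B],[0, D]] be a reduced exponential matrix in canonical form (det D ≠ 0, entries in ℕ, first row of N corresponding to x₁ being the first standard basis vector e₁). Consider the substitution x = z^N and write the total transform as w(z^N) = z₀^{A·N₀} · q(z), where A = (a₁, …, aₙ) is a vertex of the Newton polyhedron of w lying on all facets indexed by the exceptional columns, N₀ is the exceptional column submatrix, and q is the partial transform. Then: (a) the exponent vector γ of each monomial of q satisfies γ₁ = α₁ − a₁ where α is the corresponding exponent in w; consequently (b) the monomial coming from x₁^d has the unique maximal z₁-degree d − a₁ among terms of q of that z₁-degree arising from the apex, and (c) no exponent γ ∈ supp(q) has γ₁ = d − a₁ − 1 when a₁ = 0 (since w has no x₁^{d−1} term). -/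
/-- Let `w(x) = x₁^d + Σ_{j≥2} c_j(x₂,…,xₙ) x₁^{d-j}` be a Weierstrass polynomial
(`d ≥ 2`), modeled by its support `supp ⊆ ℕⁿ`: the apex `D = (d,0,…,0)` lies in the
support, and every other exponent `α` has `α₁ ≤ d - 2`. Let `N` be a reduced
exponential matrix in canonical form (its first `k ≥ 1` columns are the standard basis
vectors, and it is non-degenerate over `ℤ`), `A` a vertex exponent in the support, and
`γ(α) = (α - A)·N` the exponents of the partial transform under `x = z^N`. Then:
(a) `γ(α)₁ = α₁ - a₁` for every `α` in the support; consequently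
(b) `γ(α)₁ ≤ d - a₁` with equality only for the apex `α = D` (unique maximal
`z₁`-degree); and
(c) if `a₁ = 0` then no `γ ∈ supp(q)` has `γ₁ = d - a₁ - 1`. -/
theorem stmt_17 {n k : ℕ} [NeZero n] (hk : 1 ≤ k) (hkn : k ≤ n)
    (d : ℕ) (hd : 2 ≤ d)
    (supp : Set (Fin n → ℕ))
    (D : Fin n → ℕ) (hDdef : D = fun i => if i = 0 then d else 0)
    (hDmem : D ∈ supp)
    (hW : ∀ α ∈ supp, α ≠ D → α 0 ≤ d - 2)
    (N : Matrix (Fin n) (Fin n) ℕ)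
    (hN : ∀ j : Fin n, (j : ℕ) < k → ∀ i, N i j = if i = j then 1 else 0)
    (hNdet : (N.map (fun a => (a : ℤ))).det ≠ 0)
    (A : Fin n → ℕ) (hA : A ∈ supp)
    (γ : (Fin n → ℕ) → Fin n → ℤ)
    (hγ : ∀ α j, γ α j = ∑ i, ((α i : ℤ) - (A i : ℤ)) * (N i j : ℤ)) :
    (∀ α ∈ supp, γ α 0 = (α 0 : ℤ) - (A 0 : ℤ)) ∧
    (∀ α ∈ supp, γ α 0 ≤ (d : ℤ) - (A 0 : ℤ) ∧
      (γ α 0 = (d : ℤ) - (A 0 : ℤ) → α = D)) ∧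
    (A 0 = 0 → ∀ α ∈ supp, γ α 0 ≠ (d : ℤ) - (A 0 : ℤ) - 1) := by
  have h0k : ((0 : Fin n) : ℕ) < k := by simpa using Nat.lt_of_lt_of_le Nat.zero_lt_one hk
  have ha : ∀ α, γ α 0 = (α 0 : ℤ) - (A 0 : ℤ) := by
    intro α
    rw [hγ]
    rw [Finset.sum_eq_single (0 : Fin n)]
    · rw [hN 0 h0k 0]; simp
    · intro i _ hi
      rw [hN 0 h0k i, if_neg hi]; simp
    · simp
  have hα0 : ∀ α ∈ supp, (α 0 : ℤ) ≤ d ∧ ((α 0 : ℤ) = d → α = D) := by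
    intro α hαs
    by_cases hαD : α = D
    · subst hαD; rw [hDdef]; simp
    · have h2 := hW α hαs hαD
      have : (α 0 : ℤ) ≤ (d : ℤ) - 2 := by
        have := (Nat.cast_le (α := ℤ)).2 h2
        push_cast at this; omega
      exact ⟨by linarith, fun h => by linarith⟩
  refine ⟨fun α _ => ha α, fun α hαs => ?_, fun hA0 α hαs => ?_⟩
  · obtain ⟨h1, h2⟩ := hα0 α hαs
    rw [ha α]
    exact ⟨by linarith, fun h => h2 (by linarith)⟩
  · rw [ha α, hA0]
    by_cases hαD : α = D
    · subst hαD; rw [hDdef]; simp; omega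
    · have h2 := hW α hαs hαD
      have : (α 0 : ℤ) ≤ (d : ℤ) - 2 := by
        have := (Nat.cast_le (α := ℤ)).2 h2
        push_cast at this; omega
      push_cast; omega
end
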